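/- Let G be a finite d-regular simple graph on n vertices having, for every r with 1 ≤ r ≤ d, an independent exact r-cover. Then n is divisible by lcm{(d+r)/gcd(r,d+r) : 1 ≤ r ≤ d}; equivalently, for each r ∈ [d], (d+r) divides r·n. -/
import Mathlib


open SimpleGraph

/-- `S` is an independent exact `r`-cover of `G`: `S` is independent and every vertex
outside `S` has exactly `r` neighbours in `S`. -/
def IsIndepExactCover {V : Type*} (G : SimpleGraph V) (r : ℕ) (S : Set V) : Prop :=
  (∀ x ∈ S, ∀ y ∈ S, ¬ G.Adj x y) ∧
  ∀ v ∉ S, (S ∩ G.neighborSet v).ncard = r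

theorem stmt_1 {V : Type*} [Fintype V] (G : SimpleGraph V) (d n : ℕ)
    (hn : Fintype.card V = n)
    (hreg : ∀ v : V, (G.neighborSet v).ncard = d)
    (hcov : ∀ r, 1 ≤ r → r ≤ d → ∃ S : Set V, IsIndepExactCover G r S) :
    ((Finset.Icc 1 d).lcm fun r => (d + r) / Nat.gcd r (d + r)) ∣ n ∧
      ∀ r, 1 ≤ r → r ≤ d → (d + r) ∣ r * n := by
  classical
  have key : ∀ r, 1 ≤ r → r ≤ d → (d + r) ∣ r * n := by
    intro r hr1 hrd
    obtain ⟨S, hind, hcnt⟩ := hcov r hr1 hrd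
    set Sf := S.toFinite.toFinset with hSf
    have hmem : ∀ x, x ∈ Sf ↔ x ∈ S := fun x => S.toFinite.mem_toFinset
    -- each vertex in S has all d neighbours outside S
    have h1 : ∀ u ∈ Sf, (Sfᶜ.filter (fun v => G.Adj u v)).card = d := by
      intro u hu
      have heq : Sfᶜ.filter (fun v => G.Adj u v) = G.neighborFinset u := by
        ext v
        simp only [Finset.mem_filter, Finset.mem_compl, hmem, mem_neighborFinset]
        constructor
        · rintro ⟨_, h⟩; exact h
        · intro h
          refine ⟨fun hv => hind u ((hmem u).1 hu) v hv h, h⟩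
      rw [heq]
      have := hreg u
      rwa [Set.ncard_eq_toFinset_card'] at this
    -- each vertex outside S has exactly r neighbours in S
    have h2 : ∀ v ∈ Sfᶜ, (Sf.filter (fun u => G.Adj u v)).card = r := by
      intro v hv
      rw [Finset.mem_compl, hmem] at hv
      have heq : Sf.filter (fun u => G.Adj u v)
          = (S ∩ G.neighborSet v).toFinite.toFinset := by
        ext u
        simp only [Finset.mem_filter, hmem, Set.Finite.mem_toFinset, Set.mem_inter_iff,
          Set.mem_setOf_eq, mem_neighborSet]
        constructor
        · rintro ⟨h, h'⟩; exact ⟨h, h'.symm⟩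
        · rintro ⟨h, h'⟩; exact ⟨h, h'.symm⟩
      rw [heq, ← Set.ncard_eq_toFinset_card]
      exact hcnt v hv
    -- double counting
    have hdc : d * Sf.card = r * Sfᶜ.card := by
      have hs : ∑ u ∈ Sf, ∑ v ∈ Sfᶜ, (if G.Adj u v then 1 else 0)
          = ∑ v ∈ Sfᶜ, ∑ u ∈ Sf, (if G.Adj u v then 1 else 0) := Finset.sum_comm
      have hl : ∑ u ∈ Sf, ∑ v ∈ Sfᶜ, (if G.Adj u v then 1 else 0) = d * Sf.card :=
        calc ∑ u ∈ Sf, ∑ v ∈ Sfᶜ, (if G.Adj u v then 1 else 0)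
            = ∑ _u ∈ Sf, d := Finset.sum_congr rfl (fun u hu => by
              rw [← Finset.card_filter]; exact h1 u hu)
          _ = d * Sf.card := by rw [Finset.sum_const, smul_eq_mul, mul_comm]
      have hr' : ∑ v ∈ Sfᶜ, ∑ u ∈ Sf, (if G.Adj u v then 1 else 0) = r * Sfᶜ.card :=
        calc ∑ v ∈ Sfᶜ, ∑ u ∈ Sf, (if G.Adj u v then 1 else 0)
            = ∑ _v ∈ Sfᶜ, r := Finset.sum_congr rfl (fun v hv => by
              rw [← Finset.card_filter]; exact h2 v hv)
          _ = r * Sfᶜ.card := by rw [Finset.sum_const, smul_eq_mul, mul_comm]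
      rw [← hl, hs, hr']
    have hle : Sf.card ≤ n := hn ▸ Finset.card_le_univ Sf
    have hcard : Sfᶜ.card = n - Sf.card := by
      rw [Finset.card_compl, hn]
    rw [hcard] at hdc
    have : r * n = (d + r) * Sf.card := by
      calc r * n = r * ((n - Sf.card) + Sf.card) := by rw [Nat.sub_add_cancel hle]
        _ = r * (n - Sf.card) + r * Sf.card := mul_add _ _ _
        _ = d * Sf.card + r * Sf.card := by rw [hdc]
        _ = (d + r) * Sf.card := (add_mul _ _ _).symm
    exact ⟨Sf.card, this⟩
  refine ⟨Finset.lcm_dvd fun r hr => ?_, key⟩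
  rw [Finset.mem_Icc] at hr
  have h := key r hr.1 hr.2
  set g := Nat.gcd r (d + r) with hg
  have hgpos : 0 < g := Nat.gcd_pos_of_pos_left _ hr.1
  have hcop : Nat.Coprime (r / g) ((d + r) / g) := Nat.coprime_div_gcd_div_gcd hgpos
  have hd1 : (d + r) / g * g = d + r := Nat.div_mul_cancel (Nat.gcd_dvd_right _ _)
  have hr1' : r / g * g = r := Nat.div_mul_cancel (Nat.gcd_dvd_left _ _)
  have h2 : (d + r) / g ∣ (r / g) * n := by
    rw [← Nat.mul_dvd_mul_iff_right hgpos]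
    have hrn : r / g * n * g = r * n := by rw [mul_right_comm, hr1']
    rw [hd1, hrn]
    exact h
  exact hcop.symm.dvd_of_dvd_mul_left h2
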